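/- arXiv:1508.02966 — 7 statements merged into one kernel-verified Lean document; each statement's English description precedes it below -/
import Mathlib

section
/- Let a₁,b₁,a₂,b₂,a₃,b₃ be real parameters with 0 ≤ aᵢ < bᵢ for i = 1,2,3 satisfying the ordering condition (Ω). Define the excess terms E₁ := (b₁−a₁)(b₂−a₂)²(b₃−a₃)²(3(b₁b₂a₃ − a₁b₂a₃ + b₁a₂b₃ − a₁a₂b₃) + 2(a₁b₂b₃ − b₁a₂a₃))/(24(b₂b₃−a₂a₃)), E₂ := (b₁−a₁)(b₂−a₂)²(b₃−a₃)²(5(a₁b₁b₃ − a₁b₁a₃) + 3(b₁²a₃ − a₁²b₃))/(24(b₁b₃−a₁a₃)), and E₃ := (b₁−a₁)(b₂−a₂)²(b₃−a₃)²(5(a₁b₁b₂ − a₁b₁a₂) + 3(b₁²a₂ − a₁²b₂))/(24(b₁b₂−a₁a₂)). Then 0 ≤ E₃ ≤ E₂ ≤ E₁ (so that Vol 𝒫_H ≤ Vol 𝒫₃ ≤ Vol 𝒫₂ ≤ Vol 𝒫₁). -/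
/-- Corollary 1 of Speakman–Lee: the excess-volume terms of the three
double-McCormick relaxations over the trilinear hull satisfy
`0 ≤ E₃ ≤ E₂ ≤ E₁`, so `Vol 𝒫_H ≤ Vol 𝒫₃ ≤ Vol 𝒫₂ ≤ Vol 𝒫₁`. -/
theorem excess_volume_ordering
    (a₁ b₁ a₂ b₂ a₃ b₃ : ℝ)
    (ha₁ : 0 ≤ a₁) (hab₁ : a₁ < b₁)
    (ha₂ : 0 ≤ a₂) (hab₂ : a₂ < b₂)
    (ha₃ : 0 ≤ a₃) (hab₃ : a₃ < b₃)
    (hΩ₁ : a₁*b₂*b₃ + b₁*a₂*a₃ ≤ b₁*a₂*b₃ + a₁*b₂*a₃)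
    (hΩ₂ : b₁*a₂*b₃ + a₁*b₂*a₃ ≤ b₁*b₂*a₃ + a₁*a₂*b₃) :
    let E₁ := (b₁-a₁)*(b₂-a₂)^2*(b₃-a₃)^2 *
      (3*(b₁*b₂*a₃ - a₁*b₂*a₃ + b₁*a₂*b₃ - a₁*a₂*b₃) + 2*(a₁*b₂*b₃ - b₁*a₂*a₃))
        / (24*(b₂*b₃ - a₂*a₃))
    let E₂ := (b₁-a₁)*(b₂-a₂)^2*(b₃-a₃)^2 *
      (5*(a₁*b₁*b₃ - a₁*b₁*a₃) + 3*(b₁^2*a₃ - a₁^2*b₃)) / (24*(b₁*b₃ - a₁*a₃))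
    let E₃ := (b₁-a₁)*(b₂-a₂)^2*(b₃-a₃)^2 *
      (5*(a₁*b₁*b₂ - a₁*b₁*a₂) + 3*(b₁^2*a₂ - a₁^2*b₂)) / (24*(b₁*b₂ - a₁*a₂))
    0 ≤ E₃ ∧ E₃ ≤ E₂ ∧ E₂ ≤ E₁ := by
  intro E₁ E₂ E₃
  have hb₁ : 0 < b₁ := ha₁.trans_lt hab₁
  have hb₂ : 0 < b₂ := ha₂.trans_lt hab₂
  have hb₃ : 0 < b₃ := ha₃.trans_lt hab₃
  have hu : a₁*b₂ ≤ b₁*a₂ := by nlinarith [sub_pos.2 hab₃]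
  have hv : a₂*b₃ ≤ b₂*a₃ := by nlinarith [sub_pos.2 hab₁]
  have hD₁ : 0 < 24*(b₂*b₃ - a₂*a₃) := by nlinarith
  have hD₂ : 0 < 24*(b₁*b₃ - a₁*a₃) := by nlinarith
  have hD₃ : 0 < 24*(b₁*b₂ - a₁*a₂) := by nlinarith
  have hC : (0:ℝ) ≤ (b₁-a₁)*(b₂-a₂)^2*(b₃-a₃)^2 :=
    mul_nonneg (mul_nonneg (sub_pos.2 hab₁).le (sq_nonneg _)) (sq_nonneg _)
  have hq : (0:ℝ) ≤ 3*b₁^2 - 2*a₁*b₁ + 3*a₁^2 := by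
    nlinarith [sq_nonneg (b₁-a₁), sq_nonneg a₁, sq_nonneg b₁]
  have hq3 : (0:ℝ) ≤ 3*b₃^2 - 2*a₃*b₃ + 3*a₃^2 := by
    nlinarith [sq_nonneg (b₃-a₃), sq_nonneg a₃, sq_nonneg b₃]
  refine ⟨?_, ?_, ?_⟩
  · show 0 ≤ _ / _
    apply div_nonneg _ hD₃.le
    apply mul_nonneg hC
    nlinarith [mul_nonneg (mul_nonneg ha₁ hb₁.le) (sub_pos.2 hab₂).le,
      mul_nonneg (mul_nonneg ha₂ hb₁.le) (sub_pos.2 hab₁).le,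
      mul_nonneg (mul_nonneg ha₁ hb₂.le) (sub_pos.2 hab₁).le]
  · show _ * _ / _ ≤ _ * _ / _
    rw [mul_div_assoc, mul_div_assoc]
    apply mul_le_mul_of_nonneg_left _ hC
    rw [div_le_div_iff₀ hD₃ hD₂]
    have h := mul_nonneg (mul_nonneg (sub_nonneg.2 hv) (sub_pos.2 hab₁).le) hq
    have e : (5*(a₁*b₁*b₃ - a₁*b₁*a₃) + 3*(b₁^2*a₃ - a₁^2*b₃)) * (24*(b₁*b₂ - a₁*a₂))
        - (5*(a₁*b₁*b₂ - a₁*b₁*a₂) + 3*(b₁^2*a₂ - a₁^2*b₂)) * (24*(b₁*b₃ - a₁*a₃))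
        = 24*((b₂*a₃ - a₂*b₃) * (b₁ - a₁) * (3*b₁^2 - 2*a₁*b₁ + 3*a₁^2)) := by ring
    linarith [h, e]
  · show _ * _ / _ ≤ _ * _ / _
    rw [mul_div_assoc, mul_div_assoc]
    apply mul_le_mul_of_nonneg_left _ hC
    rw [div_le_div_iff₀ hD₂ hD₁]
    have h := mul_nonneg (mul_nonneg (sub_nonneg.2 hu) (sub_pos.2 hab₁).le) hq3
    have e : (3*(b₁*b₂*a₃ - a₁*b₂*a₃ + b₁*a₂*b₃ - a₁*a₂*b₃) + 2*(a₁*b₂*b₃ - b₁*a₂*a₃)) * (24*(b₁*b₃ - a₁*a₃))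
        - (5*(a₁*b₁*b₃ - a₁*b₁*a₃) + 3*(b₁^2*a₃ - a₁^2*b₃)) * (24*(b₂*b₃ - a₂*a₃))
        = 24*((b₁*a₂ - a₁*b₂) * (b₁ - a₁) * (3*b₃^2 - 2*a₃*b₃ + 3*a₃^2)) := by ring
    linarith [h, e]
end

section
/- Let a₃,b₃ be real parameters with 0 ≤ a₃ < b₃, and set a₁ = a₂ = 0 and b₁ = b₂ = 1 (two binary variables and one continuous variable). Then the excess terms satisfy E₃ = 0 and E₁ = E₂ = 3a₃(b₃−a₃)²/(24b₃); that is, grouping the two binary variables first gives a double-McCormick relaxation whose volume equals that of the trilinear hull, while the other two groupings each exceed it by 3a₃(b₃−a₃)²/(24b₃). -/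
/-- Corollary 2 of Speakman–Lee: in the special case of two binary variables
(`a₁ = a₂ = 0`, `b₁ = b₂ = 1`) and one continuous variable `x₃ ∈ [a₃, b₃]`,
the excess-volume term of the grouping of the two binary variables vanishes
(`E₃ = 0`, i.e. `𝒫₃` has the volume of the trilinear hull), while the other
two groupings each exceed the hull volume by `3a₃(b₃−a₃)²/(24b₃)`. -/
theorem excess_volume_two_binary
    (a₁ b₁ a₂ b₂ a₃ b₃ : ℝ)
    (ha₁ : a₁ = 0) (hb₁ : b₁ = 1) (ha₂ : a₂ = 0) (hb₂ : b₂ = 1)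
    (ha₃ : 0 ≤ a₃) (hab₃ : a₃ < b₃) :
    let E₁ := (b₁-a₁)*(b₂-a₂)^2*(b₃-a₃)^2 *
      (3*(b₁*b₂*a₃ - a₁*b₂*a₃ + b₁*a₂*b₃ - a₁*a₂*b₃) + 2*(a₁*b₂*b₃ - b₁*a₂*a₃))
        / (24*(b₂*b₃ - a₂*a₃))
    let E₂ := (b₁-a₁)*(b₂-a₂)^2*(b₃-a₃)^2 *
      (5*(a₁*b₁*b₃ - a₁*b₁*a₃) + 3*(b₁^2*a₃ - a₁^2*b₃)) / (24*(b₁*b₃ - a₁*a₃))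
    let E₃ := (b₁-a₁)*(b₂-a₂)^2*(b₃-a₃)^2 *
      (5*(a₁*b₁*b₂ - a₁*b₁*a₂) + 3*(b₁^2*a₂ - a₁^2*b₂)) / (24*(b₁*b₂ - a₁*a₂))
    E₃ = 0 ∧ E₁ = 3*a₃*(b₃-a₃)^2/(24*b₃) ∧ E₂ = 3*a₃*(b₃-a₃)^2/(24*b₃) := by
  subst ha₁ hb₁ ha₂ hb₂
  refine ⟨by norm_num, ?_, ?_⟩ <;> ring_nf <;> norm_num
end

section
/- Let P be a convex set in a real vector space and let w₁ and w₂ be points not in P. If the line segment between w₁ and w₂ intersects P (i.e., segment[w₁, w₂] ∩ P ≠ ∅), then conv(P ∪ {w₁}) ∪ conv(P ∪ {w₂}) is convex, and moreover conv(P ∪ {w₁, w₂}) = conv(P ∪ {w₁}) ∪ conv(P ∪ {w₂}). -/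
private lemma convex_mem4 {V : Type*} [AddCommGroup V] [Module ℝ V] {C : Set V}
    (hC : Convex ℝ C)
    {x y z w : V} (hx : x ∈ C) (hy : y ∈ C) (hz : z ∈ C) (hw : w ∈ C)
    {a b c d : ℝ} (ha : 0 ≤ a) (hb : 0 ≤ b) (hc : 0 ≤ c) (hd : 0 ≤ d)
    (hsum : a + b + c + d = 1) :
    a • x + b • y + c • z + d • w ∈ C := by
  have := hC.sum_mem (t := (Finset.univ : Finset (Fin 4))) (w := ![a,b,c,d]) (z := ![x,y,z,w])
    (fun i _ => by fin_cases i <;> simpa)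
    (by simp [Fin.sum_univ_four]; linarith)
    (fun i _ => by fin_cases i <;> simpa)
  simpa [Fin.sum_univ_four] using this

private lemma core_lemma {V : Type*} [AddCommGroup V] [Module ℝ V] {P : Set V}
    {w₁ w₂ m p q : V} {s c₁ c₂ α β : ℝ}
    (hm : m ∈ P) (hp : p ∈ P) (hq : q ∈ P)
    (hs0 : 0 < s) (hmeq : (1-s) • w₁ + s • w₂ = m)
    (hc₁ : 0 ≤ c₁) (hc₂ : 0 ≤ c₂) (hα : 0 ≤ α) (hβ : 0 ≤ β)
    (hsum : c₁ + c₂ + α + β = 1)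
    (hle : β * (1-s) ≤ α * s) :
    c₁ • p + c₂ • q + α • w₁ + β • w₂ ∈ convexHull ℝ (P ∪ {w₁}) := by
  have hC : Convex ℝ (convexHull ℝ (P ∪ {w₁})) := convex_convexHull ℝ _
  have hsub : P ⊆ P ∪ {w₁} := Set.subset_union_left
  have hs : s ≠ 0 := ne_of_gt hs0
  have key : c₁ • p + c₂ • q + α • w₁ + β • w₂
      = c₁ • p + c₂ • q + (β/s) • m + (α - β*(1-s)/s) • w₁ := by
    rw [← hmeq]; match_scalars <;> field_simp <;> ring
  rw [key]
  refine convex_mem4 hC (subset_convexHull ℝ _ (hsub hp)) (subset_convexHull ℝ _ (hsub hq))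
    (subset_convexHull ℝ _ (hsub hm)) (subset_convexHull ℝ _ (by simp)) hc₁ hc₂
    (by positivity) ?_ ?_
  · rw [sub_nonneg, div_le_iff₀ hs0]; exact hle
  · have h1 : β/s - β*(1-s)/s = β := by field_simp; ring
    linarith

/-- Lemma 1 of Speakman–Lee: if `P` is a convex set, `w₁, w₂ ∉ P`, and the
segment between `w₁` and `w₂` meets `P`, then `conv(P ∪ {w₁}) ∪ conv(P ∪ {w₂})`
is convex and equals `conv(P ∪ {w₁, w₂})`. -/
theorem convexHull_union_of_segment_inter
    {V : Type*} [AddCommGroup V] [Module ℝ V]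
    (P : Set V) (hP : Convex ℝ P)
    (w₁ w₂ : V) (hw₁ : w₁ ∉ P) (hw₂ : w₂ ∉ P)
    (hseg : (segment ℝ w₁ w₂ ∩ P).Nonempty) :
    Convex ℝ (convexHull ℝ (P ∪ {w₁}) ∪ convexHull ℝ (P ∪ {w₂})) ∧
    convexHull ℝ (P ∪ {w₁, w₂})
      = convexHull ℝ (P ∪ {w₁}) ∪ convexHull ℝ (P ∪ {w₂}) := by
  obtain ⟨m, hmseg, hmP⟩ := hseg
  obtain ⟨a, b, ha, hb, hab, hmeq⟩ := hmseg
  have hPne : P.Nonempty := ⟨m, hmP⟩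
  have hb0 : 0 < b := by
    rcases lt_or_eq_of_le hb with h | h; · exact h
    exfalso; apply hw₁
    have : a = 1 := by linarith
    have : w₁ = m := by rw [← hmeq, ← h, this]; simp
    rwa [this]
  have ha0 : 0 < a := by
    rcases lt_or_eq_of_le ha with h | h; · exact h
    exfalso; apply hw₂
    have : b = 1 := by linarith
    have : w₂ = m := by rw [← hmeq, ← h, this]; simp
    rwa [this]
  have hm1 : (1-b) • w₁ + b • w₂ = m := by
    rw [show (1:ℝ)-b = a by linarith]; exact hmeq
  have hm2 : (1-a) • w₂ + a • w₁ = m := by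
    rw [show (1:ℝ)-a = b by linarith, ← hmeq]; abel
  have repA : ∀ w : V, ∀ x ∈ convexHull ℝ (P ∪ {w}), ∃ p ∈ P, x ∈ segment ℝ w p := by
    intro w x hx
    rw [Set.union_singleton, convexHull_insert hPne, hP.convexHull_eq] at hx
    simpa using hx
  have mixed : ∀ x ∈ convexHull ℝ (P ∪ {w₁}), ∀ y ∈ convexHull ℝ (P ∪ {w₂}),
      ∀ t u : ℝ, 0 ≤ t → 0 ≤ u → t + u = 1 →
      t • x + u • y ∈ convexHull ℝ (P ∪ {w₁}) ∪ convexHull ℝ (P ∪ {w₂}) := by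
    intro x hx y hy t u ht hu htu
    obtain ⟨p, hp, θ, θ', hθ, hθ', hθs, hxeq⟩ := repA w₁ x hx
    obtain ⟨q, hq, φ, φ', hφ, hφ', hφs, hyeq⟩ := repA w₂ y hy
    have hz : t • x + u • y = (t*θ') • p + (u*φ') • q + (t*θ) • w₁ + (u*φ) • w₂ := by
      rw [← hxeq, ← hyeq]; module
    rw [hz]
    have hsum4 : t*θ' + u*φ' + t*θ + u*φ = 1 := by nlinarith
    by_cases hcase : (u*φ) * (1-b) ≤ (t*θ) * b
    · left
      exact core_lemma hmP hp hq hb0 hm1 (by positivity) (by positivity) (by positivity)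
        (by positivity) hsum4 hcase
    · right
      push_neg at hcase
      have hre : (t*θ') • p + (u*φ') • q + (t*θ) • w₁ + (u*φ) • w₂
          = (t*θ') • p + (u*φ') • q + (u*φ) • w₂ + (t*θ) • w₁ := by abel
      rw [hre]
      exact core_lemma hmP hp hq ha0 hm2 (by positivity) (by positivity) (by positivity)
        (by positivity) (by linarith)
        (by rw [show (1:ℝ)-a = b by linarith, show a = 1-b by linarith]; linarith)
  have hconv : Convex ℝ (convexHull ℝ (P ∪ {w₁}) ∪ convexHull ℝ (P ∪ {w₂})) := by
    intro x hx y hy t u ht hu htu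
    rcases hx with hx | hx <;> rcases hy with hy | hy
    · exact Or.inl ((convex_convexHull ℝ _) hx hy ht hu htu)
    · exact mixed x hx y hy t u ht hu htu
    · have := mixed y hy x hx u t hu ht (by linarith)
      rwa [show t • x + u • y = u • y + t • x by abel]
    · exact Or.inr ((convex_convexHull ℝ _) hx hy ht hu htu)
  refine ⟨hconv, subset_antisymm ?_ ?_⟩
  · apply convexHull_min _ hconv
    rintro v (hv | hv | hv)
    · exact Or.inl (subset_convexHull ℝ _ (Or.inl hv))
    · exact Or.inl (subset_convexHull ℝ _ (Or.inr hv))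
    · exact Or.inr (subset_convexHull ℝ _ (Or.inr hv))
  · apply Set.union_subset <;> apply convexHull_mono <;>
      rintro v (hv | hv) <;> simp_all
end

section
/- Let a₁,b₁,a₂,b₂,a₃,b₃ be real parameters with 0 ≤ aᵢ < bᵢ for i = 1,2,3. Then the 4-dimensional Lebesgue volume of the simplex 𝒮 := conv{v¹, v², v⁴, v⁵, v⁶} in ℝ⁴ equals (b₁−a₁)²(b₂−a₂)(b₃−a₃)(b₂b₃−a₂a₃)/24. -/
open MeasureTheory Pointwise

def Oset (σ : Equiv.Perm (Fin 4)) : Set (Fin 4 → ℝ) :=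
  {x | 0 ≤ x (σ 0) ∧ x (σ 0) ≤ x (σ 1) ∧ x (σ 1) ≤ x (σ 2) ∧ x (σ 2) ≤ x (σ 3) ∧ x (σ 3) ≤ 1}

lemma measurableSet_Oset (σ : Equiv.Perm (Fin 4)) : MeasurableSet (Oset σ) := by
  have h : ∀ i j : Fin 4, MeasurableSet {x : Fin 4 → ℝ | x i ≤ x j} := fun i j =>
    measurableSet_le (measurable_pi_apply i) (measurable_pi_apply j)
  have h0 : ∀ i : Fin 4, MeasurableSet {x : Fin 4 → ℝ | 0 ≤ x i} := fun i =>
    measurableSet_le measurable_const (measurable_pi_apply i)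
  have h1 : ∀ i : Fin 4, MeasurableSet {x : Fin 4 → ℝ | x i ≤ 1} := fun i =>
    measurableSet_le (measurable_pi_apply i) measurable_const
  exact ((h0 _).inter ((h _ _).inter ((h _ _).inter ((h _ _).inter (h1 _)))))

lemma Oset_eq_preimage (σ : Equiv.Perm (Fin 4)) :
    Oset σ = (LinearMap.funLeft ℝ ℝ σ) ⁻¹' (Oset 1) := by
  ext x
  simp [Oset, LinearMap.funLeft]

lemma toMatrix'_funLeft (σ : Equiv.Perm (Fin 4)) :
    LinearMap.toMatrix' (LinearMap.funLeft ℝ ℝ (σ : Fin 4 → Fin 4)) = σ.permMatrix ℝ := by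
  ext i j
  simp [LinearMap.toMatrix'_apply, LinearMap.funLeft, Equiv.Perm.permMatrix,
    PEquiv.toMatrix_apply, Equiv.toPEquiv_apply, Pi.single_apply, eq_comm]

lemma volume_Oset (σ : Equiv.Perm (Fin 4)) : volume (Oset σ) = volume (Oset 1) := by
  rw [Oset_eq_preimage σ]
  have hdet : LinearMap.det (LinearMap.funLeft ℝ ℝ (σ : Fin 4 → Fin 4)) = (σ.sign : ℝ) := by
    rw [← LinearMap.det_toMatrix', toMatrix'_funLeft, Matrix.det_permutation]
  rw [Measure.addHaar_preimage_linearMap volume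
    (by rw [hdet]; rcases Int.units_eq_one_or σ.sign with h | h <;> simp [h])]
  rw [hdet]
  rcases Int.units_eq_one_or σ.sign with h | h <;> · rw [h]; norm_num

lemma cube_eq_iUnion :
    (Set.univ.pi fun _ : Fin 4 => Set.Icc (0:ℝ) 1) = ⋃ σ : Equiv.Perm (Fin 4), Oset σ := by
  ext x
  simp only [Set.mem_pi, Set.mem_univ, forall_true_left, Set.mem_Icc, Set.mem_iUnion]
  constructor
  · intro h
    refine ⟨Tuple.sort x, ?_, ?_, ?_, ?_, ?_⟩
    · exact (h _).1
    · exact Tuple.monotone_sort x (by decide : (0 : Fin 4) ≤ 1)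
    · exact Tuple.monotone_sort x (by decide : (1 : Fin 4) ≤ 2)
    · exact Tuple.monotone_sort x (by decide : (2 : Fin 4) ≤ 3)
    · exact (h _).2
  · rintro ⟨σ, h0, h01, h12, h23, h3⟩ i
    obtain ⟨k, rfl⟩ := σ.surjective i
    fin_cases k
    · exact ⟨h0, le_trans h01 (le_trans h12 (le_trans h23 h3))⟩
    · exact ⟨le_trans h0 h01, le_trans h12 (le_trans h23 h3)⟩
    · exact ⟨le_trans h0 (le_trans h01 h12), le_trans h23 h3⟩
    · exact ⟨le_trans h0 (le_trans h01 (le_trans h12 h23)), h3⟩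

lemma volume_noninj :
    volume {x : Fin 4 → ℝ | ∃ i j : Fin 4, i ≠ j ∧ x i = x j} = 0 := by
  have : {x : Fin 4 → ℝ | ∃ i j : Fin 4, i ≠ j ∧ x i = x j}
      ⊆ ⋃ p : Fin 4 × Fin 4, {x : Fin 4 → ℝ | p.1 ≠ p.2 ∧ x p.1 = x p.2} := by
    rintro x ⟨i, j, hij, hx⟩
    exact Set.mem_iUnion.2 ⟨(i, j), hij, hx⟩
  refine measure_mono_null this (measure_iUnion_null fun p => ?_)
  rcases eq_or_ne p.1 p.2 with h | h
  · simp [h]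
  · have hsub : {x : Fin 4 → ℝ | p.1 ≠ p.2 ∧ x p.1 = x p.2}
        ⊆ (LinearMap.ker ((LinearMap.proj p.1 : (Fin 4 → ℝ) →ₗ[ℝ] ℝ) - LinearMap.proj p.2) :
          Submodule ℝ (Fin 4 → ℝ)) := by
      rintro x ⟨-, hx⟩
      simp [LinearMap.mem_ker, sub_eq_zero, hx]
    refine measure_mono_null hsub (Measure.addHaar_submodule _ _ ?_)
    intro htop
    have h1 : (Pi.single p.1 1 : Fin 4 → ℝ) ∈
        LinearMap.ker ((LinearMap.proj p.1 : (Fin 4 → ℝ) →ₗ[ℝ] ℝ) - LinearMap.proj p.2) := by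
      rw [htop]; trivial
    simp [LinearMap.mem_ker, sub_eq_zero, Pi.single_apply, h, Ne.symm h] at h1

lemma aedisjoint_Oset : Pairwise (Function.onFun (AEDisjoint volume) Oset) := by
  intro σ τ hst
  have hsub : Oset σ ∩ Oset τ ⊆ {x : Fin 4 → ℝ | ∃ i j : Fin 4, i ≠ j ∧ x i = x j} := by
    rintro x ⟨hσ, hτ⟩
    by_contra hni
    simp only [Set.mem_setOf_eq] at hni
    push_neg at hni
    have hinj : Function.Injective x := fun i j h => by
      by_contra hij; exact hni i j hij h
    have hmono : ∀ ρ : Equiv.Perm (Fin 4), x ∈ Oset ρ → ρ = Tuple.sort x := by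
      intro ρ hρ
      rw [Tuple.eq_sort_iff]
      constructor
      · -- Monotone (x ∘ ρ)
        obtain ⟨-, h01, h12, h23, -⟩ := hρ
        intro i j hij
        fin_cases i <;> fin_cases j <;>
          simp_all <;> first
          | rfl
          | exact h01 | exact h12 | exact h23
          | exact le_trans h01 h12 | exact le_trans h12 h23
          | exact le_trans h01 (le_trans h12 h23)
          | omega
      · intro i j hij hx
        exact absurd (ρ.injective (hinj hx)) hij.ne
    exact hst ((hmono σ hσ).trans (hmono τ hτ).symm)
  exact measure_mono_null hsub volume_noninj

lemma volume_Oset_one : volume (Oset 1) = ENNReal.ofReal (1 / 24) := by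
  have hcube : volume (Set.univ.pi fun _ : Fin 4 => Set.Icc (0:ℝ) 1) = 1 := by
    rw [volume_pi_pi]
    simp [Real.volume_Icc]
  rw [cube_eq_iUnion, measure_iUnion₀ aedisjoint_Oset
    (fun σ => (measurableSet_Oset σ).nullMeasurableSet), tsum_fintype] at hcube
  have hsum : ∑ σ : Equiv.Perm (Fin 4), volume (Oset σ)
      = 24 * volume (Oset 1) := by
    rw [Finset.sum_congr rfl fun σ _ => volume_Oset σ, Finset.sum_const, Finset.card_univ,
      Fintype.card_perm, Fintype.card_fin]
    norm_num [nsmul_eq_mul, Nat.factorial]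
  rw [hsum] at hcube
  have h24 : (24 : ENNReal) ≠ 0 := by norm_num
  have h24' : (24 : ENNReal) ≠ ⊤ := by norm_num
  have : volume (Oset 1) = 24⁻¹ := by
    rw [← one_mul (volume (Oset 1)), ← ENNReal.inv_mul_cancel h24 h24', mul_assoc, hcube, mul_one]
  rw [this]
  rw [ENNReal.ofReal_div_of_pos (by norm_num)]
  norm_num

def Tset : Set (Fin 4 → ℝ) :=
  {x | 0 ≤ x 0 ∧ 0 ≤ x 1 ∧ 0 ≤ x 2 ∧ 0 ≤ x 3 ∧ x 0 + x 1 + x 2 + x 3 ≤ 1}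

noncomputable def Gmap : (Fin 4 → ℝ) →ₗ[ℝ] (Fin 4 → ℝ) :=
  Matrix.toLin' !![1,0,0,0; 1,1,0,0; 1,1,1,0; 1,1,1,1]

lemma Tset_eq_preimage : Tset = Gmap ⁻¹' (Oset 1) := by
  ext x
  simp only [Tset, Oset, Gmap, Set.mem_preimage, Set.mem_setOf_eq, Matrix.toLin'_apply,
    Matrix.mulVec, dotProduct, Fin.sum_univ_four, Equiv.Perm.coe_one, id_eq]
  norm_num [Matrix.cons_val_zero, Matrix.cons_val_one, Matrix.head_cons, Matrix.cons_val_two, Matrix.cons_val_three, Matrix.tail_cons, Matrix.vecHead,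
    Matrix.vecTail]

lemma det_Gmat : Matrix.det !![(1:ℝ),0,0,0; 1,1,0,0; 1,1,1,0; 1,1,1,1] = 1 := by
  simp [Matrix.det_succ_row_zero, Fin.sum_univ_succ]

lemma volume_Tset : volume Tset = ENNReal.ofReal (1 / 24) := by
  rw [Tset_eq_preimage,
    Measure.addHaar_preimage_linearMap volume (f := Gmap)
      (by rw [Gmap, LinearMap.det_toLin', det_Gmat]; norm_num),
    Gmap, LinearMap.det_toLin', det_Gmat, volume_Oset_one]
  norm_num

set_option maxHeartbeats 1000000

/-- The 4-dimensional volume of the simplex `𝒮 = conv{v¹, v², v⁴, v⁵, v⁶}`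
used in the triangulation of the trilinear hull by Speakman–Lee. -/
theorem volume_simplex_S
    (a₁ b₁ a₂ b₂ a₃ b₃ : ℝ)
    (ha₁ : 0 ≤ a₁) (hab₁ : a₁ < b₁)
    (ha₂ : 0 ≤ a₂) (hab₂ : a₂ < b₂)
    (ha₃ : 0 ≤ a₃) (hab₃ : a₃ < b₃) :
    volume (convexHull ℝ
      ({![b₁*a₂*a₃, b₁, a₂, a₃], ![a₁*a₂*a₃, a₁, a₂, a₃], ![a₁*b₂*a₃, a₁, b₂, a₃],
        ![a₁*b₂*b₃, a₁, b₂, b₃], ![b₁*b₂*b₃, b₁, b₂, b₃]} : Set (Fin 4 → ℝ)))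
      = ENNReal.ofReal
          ((b₁-a₁)^2*(b₂-a₂)*(b₃-a₃)*(b₂*b₃-a₂*a₃) / 24) := by
  set v₀ : Fin 4 → ℝ := ![a₁*a₂*a₃, a₁, a₂, a₃] with hv₀
  set Mmat : Matrix (Fin 4) (Fin 4) ℝ :=
    !![(b₁-a₁)*a₂*a₃, a₁*(b₂-a₂)*a₃, a₁*b₂*b₃-a₁*a₂*a₃, b₁*b₂*b₃-a₁*a₂*a₃;
       b₁-a₁, 0, 0, b₁-a₁;
       0, b₂-a₂, b₂-a₂, b₂-a₂;
       0, 0, b₃-a₃, b₃-a₃] with hM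
  set Lmap : (Fin 4 → ℝ) →ₗ[ℝ] (Fin 4 → ℝ) := Matrix.toLin' Mmat with hL
  set S : Set (Fin 4 → ℝ) :=
    ({![b₁*a₂*a₃, b₁, a₂, a₃], ![a₁*a₂*a₃, a₁, a₂, a₃], ![a₁*b₂*a₃, a₁, b₂, a₃],
      ![a₁*b₂*b₃, a₁, b₂, b₃], ![b₁*b₂*b₃, b₁, b₂, b₃]} : Set (Fin 4 → ℝ)) with hS
  have hLapp : ∀ x : Fin 4 → ℝ, Lmap x = Mmat.mulVec x := fun x => Matrix.toLin'_apply Mmat x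
  have hTconv : Convex ℝ Tset := by
    rintro x ⟨hx0, hx1, hx2, hx3, hxs⟩ y ⟨hy0, hy1, hy2, hy3, hys⟩ p q hp hq hpq
    simp only [Tset, Set.mem_setOf_eq, Pi.add_apply, Pi.smul_apply, smul_eq_mul]
    exact ⟨by nlinarith, by nlinarith, by nlinarith, by nlinarith, by nlinarith⟩
  have hval : ∀ x : Fin 4 → ℝ, v₀ + Lmap x =
      ![a₁*a₂*a₃ + ((b₁-a₁)*a₂*a₃ * x 0 + a₁*(b₂-a₂)*a₃ * x 1
          + (a₁*b₂*b₃-a₁*a₂*a₃) * x 2 + (b₁*b₂*b₃-a₁*a₂*a₃) * x 3),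
        a₁ + ((b₁-a₁) * x 0 + (b₁-a₁) * x 3),
        a₂ + ((b₂-a₂) * x 1 + (b₂-a₂) * x 2 + (b₂-a₂) * x 3),
        a₃ + ((b₃-a₃) * x 2 + (b₃-a₃) * x 3)] := by
    intro x
    funext i
    fin_cases i <;>
      simp only [hLapp, hv₀, hM, Pi.add_apply, Matrix.mulVec, dotProduct,
        Fin.sum_univ_four] <;>
      norm_num [Matrix.cons_val_zero, Matrix.cons_val_one, Matrix.head_cons, Matrix.cons_val_two, Matrix.cons_val_three, Matrix.tail_cons,
        Matrix.vecHead, Matrix.vecTail] <;>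
      ring
  have hvert : ∀ c : Fin 4 → ℝ, c ∈ Tset → v₀ + Lmap c ∈ (fun x => v₀ + Lmap x) '' Tset :=
    fun c hc => ⟨c, hc, rfl⟩
  have e₂ : v₀ + Lmap ![0,0,0,0] = ![a₁*a₂*a₃, a₁, a₂, a₃] := by
    rw [hval]; funext i; fin_cases i <;>
      norm_num [Matrix.cons_val_zero, Matrix.cons_val_one, Matrix.head_cons, Matrix.cons_val_two, Matrix.cons_val_three, Matrix.tail_cons]
  have e₁ : v₀ + Lmap ![1,0,0,0] = ![b₁*a₂*a₃, b₁, a₂, a₃] := by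
    rw [hval]; funext i; fin_cases i <;>
      norm_num [Matrix.cons_val_zero, Matrix.cons_val_one, Matrix.head_cons, Matrix.cons_val_two, Matrix.cons_val_three, Matrix.tail_cons] <;> ring
  have e₄ : v₀ + Lmap ![0,1,0,0] = ![a₁*b₂*a₃, a₁, b₂, a₃] := by
    rw [hval]; funext i; fin_cases i <;>
      norm_num [Matrix.cons_val_zero, Matrix.cons_val_one, Matrix.head_cons, Matrix.cons_val_two, Matrix.cons_val_three, Matrix.tail_cons] <;> ring
  have e₅ : v₀ + Lmap ![0,0,1,0] = ![a₁*b₂*b₃, a₁, b₂, b₃] := by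
    rw [hval]; funext i; fin_cases i <;>
      norm_num [Matrix.cons_val_zero, Matrix.cons_val_one, Matrix.head_cons, Matrix.cons_val_two, Matrix.cons_val_three, Matrix.tail_cons] <;> ring
  have e₆ : v₀ + Lmap ![0,0,0,1] = ![b₁*b₂*b₃, b₁, b₂, b₃] := by
    rw [hval]; funext i; fin_cases i <;>
      norm_num [Matrix.cons_val_zero, Matrix.cons_val_one, Matrix.head_cons, Matrix.cons_val_two, Matrix.cons_val_three, Matrix.tail_cons] <;> ring
  have hhull : convexHull ℝ S = (fun x => v₀ + Lmap x) '' Tset := by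
    apply le_antisymm
    · apply convexHull_min
      · intro p hp
        simp only [hS, Set.mem_insert_iff, Set.mem_singleton_iff] at hp
        rcases hp with rfl | rfl | rfl | rfl | rfl
        · exact e₁ ▸ hvert ![1,0,0,0]
            (by norm_num [Tset, Matrix.cons_val_zero, Matrix.cons_val_one, Matrix.head_cons, Matrix.cons_val_two, Matrix.cons_val_three, Matrix.tail_cons])
        · exact e₂ ▸ hvert ![0,0,0,0]
            (by norm_num [Tset, Matrix.cons_val_zero, Matrix.cons_val_one, Matrix.head_cons, Matrix.cons_val_two, Matrix.cons_val_three, Matrix.tail_cons])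
        · exact e₄ ▸ hvert ![0,1,0,0]
            (by norm_num [Tset, Matrix.cons_val_zero, Matrix.cons_val_one, Matrix.head_cons, Matrix.cons_val_two, Matrix.cons_val_three, Matrix.tail_cons])
        · exact e₅ ▸ hvert ![0,0,1,0]
            (by norm_num [Tset, Matrix.cons_val_zero, Matrix.cons_val_one, Matrix.head_cons, Matrix.cons_val_two, Matrix.cons_val_three, Matrix.tail_cons])
        · exact e₆ ▸ hvert ![0,0,0,1]
            (by norm_num [Tset, Matrix.cons_val_zero, Matrix.cons_val_one, Matrix.head_cons, Matrix.cons_val_two, Matrix.cons_val_three, Matrix.tail_cons])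
      · have h : (fun x => v₀ + Lmap x) '' Tset = (fun z => v₀ + z) '' (Lmap '' Tset) := by
          rw [Set.image_image]
        rw [h]
        exact (hTconv.linear_image Lmap).translate v₀
    · rintro - ⟨x, ⟨hx0, hx1, hx2, hx3, hxs⟩, rfl⟩
      have hmem := Finset.centerMass_mem_convexHull (t := (Finset.univ : Finset (Fin 5)))
        (s := S)
        (w := ![1 - (x 0 + x 1 + x 2 + x 3), x 0, x 1, x 2, x 3])
        (z := ![![a₁*a₂*a₃, a₁, a₂, a₃], ![b₁*a₂*a₃, b₁, a₂, a₃], ![a₁*b₂*a₃, a₁, b₂, a₃],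
          ![a₁*b₂*b₃, a₁, b₂, b₃], ![b₁*b₂*b₃, b₁, b₂, b₃]])
        (fun i _ => by fin_cases i <;>
          norm_num [Matrix.cons_val_zero, Matrix.cons_val_one, Matrix.head_cons, Matrix.cons_val_two, Matrix.cons_val_three, Matrix.tail_cons] <;> linarith)
        (by norm_num [Fin.sum_univ_five, Matrix.cons_val_zero, Matrix.cons_val_one,
          Matrix.head_cons, Matrix.cons_val_two, Matrix.cons_val_three, Matrix.cons_val_four, Matrix.tail_cons] <;> linarith)
        (fun i _ => by
          fin_cases i
          exacts [Set.mem_insert_of_mem _ (Set.mem_insert _ _),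
            Set.mem_insert _ _,
            Set.mem_insert_of_mem _ (Set.mem_insert_of_mem _ (Set.mem_insert _ _)),
            Set.mem_insert_of_mem _ (Set.mem_insert_of_mem _ (Set.mem_insert_of_mem _
              (Set.mem_insert _ _))),
            Set.mem_insert_of_mem _ (Set.mem_insert_of_mem _ (Set.mem_insert_of_mem _
              (Set.mem_insert_of_mem _ rfl)))])
      have hcm : (Finset.univ : Finset (Fin 5)).centerMass
          ![1 - (x 0 + x 1 + x 2 + x 3), x 0, x 1, x 2, x 3]
          ![![a₁*a₂*a₃, a₁, a₂, a₃], ![b₁*a₂*a₃, b₁, a₂, a₃], ![a₁*b₂*a₃, a₁, b₂, a₃],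
            ![a₁*b₂*b₃, a₁, b₂, b₃], ![b₁*b₂*b₃, b₁, b₂, b₃]] = v₀ + Lmap x := by
        rw [hval]
        simp only [Finset.centerMass, Fin.sum_univ_five]
        norm_num [Matrix.cons_val_zero, Matrix.cons_val_one, Matrix.head_cons, Matrix.cons_val_two, Matrix.cons_val_three, Matrix.tail_cons, Matrix.cons_val_four]
        have h1 : (1 - (x 0 + x 1 + x 2 + x 3) + x 0 + x 1 + x 2 + x 3) = 1 := by ring
        simp only [h1, inv_one, one_mul]
        exact ⟨by ring, by ring, by ring, by ring⟩
      show v₀ + Lmap x ∈ convexHull ℝ S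
      rw [← hcm]
      exact hmem
  have hdet : LinearMap.det Lmap
      = -((b₁-a₁)^2*(b₂-a₂)*(b₃-a₃)*(b₂*b₃-a₂*a₃)) := by
    rw [hL, LinearMap.det_toLin', hM]
    rw [Matrix.det_succ_column_zero]
    simp [Fin.sum_univ_succ, Matrix.det_fin_three, Matrix.submatrix, Fin.succAbove]
    ring
  have hEpos : (0:ℝ) ≤ (b₁-a₁)^2*(b₂-a₂)*(b₃-a₃)*(b₂*b₃-a₂*a₃) := by
    have h1 : (0:ℝ) ≤ b₂*b₃-a₂*a₃ := by nlinarith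
    have h2 : (0:ℝ) ≤ (b₁-a₁)^2 := sq_nonneg _
    have h3 : (0:ℝ) ≤ b₂-a₂ := by linarith
    have h4 : (0:ℝ) ≤ b₃-a₃ := by linarith
    positivity
  rw [hhull]
  have himg : (fun x => v₀ + Lmap x) '' Tset = v₀ +ᵥ (Lmap '' Tset) := by
    rw [← Set.image_vadd, Set.image_image]
    rfl
  rw [himg, measure_vadd, Measure.addHaar_image_linearMap, volume_Tset, hdet]
  rw [abs_neg, abs_of_nonneg hEpos, ← ENNReal.ofReal_mul hEpos]
  congr 1
  ring
end

section
/- Let a₁,b₁,a₂,b₂,a₃,b₃ be real parameters with 0 ≤ aᵢ < bᵢ for i = 1,2,3 satisfying the ordering condition (Ω). Then the 4-dimensional Lebesgue volume of 𝒬 := conv{v¹, v², v⁴, v⁵, v⁶, v⁸} in ℝ⁴ equals (b₁−a₁)²(b₂−a₂)(b₃−a₃)(b₂b₃−a₂a₃)/12. -/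
open MeasureTheory Set Pointwise

private theorem corner_vol (n : ℕ) (c : ℝ) (hc : 0 ≤ c) :
    volume {x : Fin n → ℝ | (∀ i, 0 ≤ x i) ∧ ∑ i, x i ≤ c}
      = ENNReal.ofReal (c ^ n / n.factorial) := by
  induction n generalizing c with
  | zero =>
      have h : {x : Fin 0 → ℝ | (∀ i, 0 ≤ x i) ∧ ∑ i, x i ≤ c} = Set.univ := by
        ext x; simp [hc]
      rw [h]; simp [MeasureTheory.volume_pi, Measure.pi_univ]
  | succ n ih =>
      set T : Set (ℝ × (Fin n → ℝ)) :=
        {p | 0 ≤ p.1 ∧ (∀ i, 0 ≤ p.2 i) ∧ p.1 + ∑ i, p.2 i ≤ c} with hTdef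
      have hT : MeasurableSet T := by
        have h1 : T = {p : ℝ × (Fin n → ℝ) | 0 ≤ p.1} ∩
            ((⋂ i, {p : ℝ × (Fin n → ℝ) | 0 ≤ p.2 i}) ∩
              {p : ℝ × (Fin n → ℝ) | p.1 + ∑ i, p.2 i ≤ c}) := by
          ext p; simp [hTdef, Set.mem_iInter, and_assoc]
        rw [h1]
        refine (isClosed_le continuous_const continuous_fst).measurableSet.inter
          (((isClosed_iInter fun i => isClosed_le continuous_const
            ((continuous_apply i).comp continuous_snd)).measurableSet).inter
          ((isClosed_le (f := fun p : ℝ × (Fin n → ℝ) => p.1 + ∑ i, p.2 i) (by fun_prop) continuous_const).measurableSet))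
      have hpres := MeasureTheory.volume_preserving_piFinSuccAbove
        (fun _ : Fin (n + 1) => ℝ) 0
      have hST : {x : Fin (n+1) → ℝ | (∀ i, 0 ≤ x i) ∧ ∑ i, x i ≤ c}
          = (MeasurableEquiv.piFinSuccAbove (fun _ : Fin (n + 1) => ℝ) 0) ⁻¹' T := by
        ext x
        simp [hTdef, MeasurableEquiv.piFinSuccAbove, Fin.forall_fin_succ,
          Fin.sum_univ_succ, and_assoc, Fin.tail]
      rw [hST, hpres.measure_preimage hT.nullMeasurableSet]
      rw [MeasureTheory.Measure.volume_eq_prod, Measure.prod_apply hT]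
      have hslice : ∀ t : ℝ, volume (Prod.mk t ⁻¹' T)
          = Set.indicator (Set.Icc 0 c)
              (fun t => ENNReal.ofReal ((c - t) ^ n / n.factorial)) t := by
        intro t
        by_cases ht : t ∈ Set.Icc (0:ℝ) c
        · rw [Set.indicator_of_mem ht]
          have h2 : Prod.mk t ⁻¹' T
              = {y : Fin n → ℝ | (∀ i, 0 ≤ y i) ∧ ∑ i, y i ≤ c - t} := by
            ext y
            simp only [hTdef, Set.mem_preimage, Set.mem_setOf_eq]
            constructor
            · rintro ⟨_, h, hs⟩; exact ⟨h, by linarith⟩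
            · rintro ⟨h, hs⟩; exact ⟨ht.1, h, by linarith⟩
          rw [h2, ih (c - t) (by linarith [ht.2])]
        · rw [Set.indicator_of_notMem ht]
          have h2 : Prod.mk t ⁻¹' T = ∅ := by
            ext y
            simp only [hTdef, Set.mem_preimage, Set.mem_setOf_eq, Set.mem_empty_iff_false,
              iff_false]
            rintro ⟨ht0, hy, hs⟩
            have : 0 ≤ ∑ i, y i := Finset.sum_nonneg fun i _ => hy i
            exact ht ⟨ht0, by linarith⟩
          simp [h2]
      simp only [hslice]
      rw [lintegral_indicator measurableSet_Icc]
      have hint : IntegrableOn (fun t => (c - t) ^ n / (n.factorial : ℝ))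
          (Set.Icc 0 c) volume := by
        apply Continuous.integrableOn_Icc; fun_prop
      rw [← MeasureTheory.ofReal_integral_eq_lintegral_ofReal hint
        ((ae_restrict_iff' measurableSet_Icc).2 (Filter.Eventually.of_forall
        fun t ht => div_nonneg (pow_nonneg (by linarith [ht.2]) n) (Nat.cast_nonneg _)))]
      congr 1
      rw [MeasureTheory.integral_Icc_eq_integral_Ioc,
        ← intervalIntegral.integral_of_le hc]
      have := intervalIntegral.integral_comp_sub_left (fun x : ℝ => x ^ n / n.factorial) c
        (a := 0) (b := c)
      rw [this]
      simp only [sub_self, sub_zero]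
      rw [intervalIntegral.integral_div, integral_pow]
      have hnf : (n.factorial : ℝ) ≠ 0 := Nat.cast_ne_zero.2 n.factorial_ne_zero
      rw [Nat.factorial_succ]
      push_cast
      field_simp
      simp

private theorem corner_hull (n : ℕ) :
    convexHull ℝ (insert (0 : Fin n → ℝ)
        (Set.range fun i j : Fin n => if i = j then (1:ℝ) else 0))
      = {x : Fin n → ℝ | (∀ i, 0 ≤ x i) ∧ ∑ i, x i ≤ 1} := by
  apply Subset.antisymm
  · apply convexHull_min
    · rintro x (rfl | ⟨i, rfl⟩)
      · exact ⟨fun i => le_rfl, by simp⟩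
      · constructor
        · intro j; dsimp; split <;> norm_num
        · simp
    · have h1 : {x : Fin n → ℝ | (∀ i, 0 ≤ x i) ∧ ∑ i, x i ≤ 1}
          = (⋂ i, {x : Fin n → ℝ | 0 ≤ x i}) ∩ {x | ∑ i, x i ≤ 1} := by
        ext x; simp [Set.mem_iInter]
      rw [h1]
      refine (convex_iInter fun i => convex_halfSpace_ge (LinearMap.isLinear
        (LinearMap.proj i)) 0).inter ?_
      simpa [LinearMap.sum_apply] using convex_halfSpace_le
        (LinearMap.isLinear (∑ i, LinearMap.proj i : (Fin n → ℝ) →ₗ[ℝ] ℝ)) 1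
  · rintro x ⟨hx0, hx1⟩
    classical
    set G : Set (Fin n → ℝ) := insert (0 : Fin n → ℝ)
        (Set.range fun i j : Fin n => if i = j then (1:ℝ) else 0) with hG
    set z : Fin (n+1) → (Fin n → ℝ) :=
      Fin.cons 0 (fun i j => if i = j then (1:ℝ) else 0) with hz
    set w : Fin (n+1) → ℝ := Fin.cons (1 - ∑ i, x i) x with hw
    have hsum : ∑ i, w i = 1 := by
      rw [hw, Fin.sum_univ_succ]; simp
    have hmem := (convex_convexHull ℝ G).sum_mem (t := Finset.univ) (z := z) (w := w)
      (fun i _ => by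
        induction i using Fin.cases with
        | zero =>
          simp only [hw, Fin.cons_zero]
          have : 0 ≤ ∑ i, x i := Finset.sum_nonneg fun i _ => hx0 i
          linarith
        | succ j => simp only [hw, Fin.cons_succ]; exact hx0 j)
      hsum
      (fun i _ => subset_convexHull ℝ G (by
        induction i using Fin.cases with
        | zero => simp [hz, hG]
        | succ j =>
          simp only [hz, Fin.cons_succ, hG]
          exact mem_insert_of_mem _ ⟨j, rfl⟩))
    have hx : ∑ i, w i • z i = x := by
      funext j
      rw [Fin.sum_univ_succ]
      simp only [hw, hz, Fin.cons_zero, Fin.cons_succ, smul_zero, Pi.add_apply,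
        Pi.zero_apply, zero_add, Finset.sum_apply, Pi.smul_apply, smul_eq_mul]
      rw [Finset.sum_congr rfl (fun i _ => by rw [mul_ite, mul_one, mul_zero])]
      simp [Finset.sum_ite_eq']
    rwa [hx] at hmem

private theorem simplex_vol (M : Matrix (Fin 4) (Fin 4) ℝ) (v : Fin 4 → ℝ) :
    volume (convexHull ℝ
      ({v, v + (fun k => M k 0), v + (fun k => M k 1), v + (fun k => M k 2),
        v + (fun k => M k 3)} : Set (Fin 4 → ℝ)))
      = ENNReal.ofReal (|M.det| / 24) := by
  classical
  have hcorner : volume {x : Fin 4 → ℝ | (∀ i, 0 ≤ x i) ∧ ∑ i, x i ≤ 1}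
      = ENNReal.ofReal (1 / 24) := by
    have := corner_vol 4 1 zero_le_one
    norm_num at this ⊢
    convert this using 2
  have hhull := corner_hull 4
  set gens : Set (Fin 4 → ℝ) := insert (0 : Fin 4 → ℝ)
      (Set.range fun i j : Fin 4 => if i = j then (1:ℝ) else 0) with hgens
  have himg : (fun x => v + M.mulVec x) '' gens
      = {v, v + (fun k => M k 0), v + (fun k => M k 1), v + (fun k => M k 2),
        v + (fun k => M k 3)} := by
    have hr : (Set.range fun i j : Fin 4 => if i = j then (1:ℝ) else 0)
        = {(fun j => if 0 = j then (1:ℝ) else 0), (fun j => if 1 = j then (1:ℝ) else 0),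
           (fun j => if 2 = j then (1:ℝ) else 0), (fun j => if 3 = j then (1:ℝ) else 0)} := by
      ext y
      constructor
      · rintro ⟨i, rfl⟩; fin_cases i <;> simp
      · rintro (rfl | rfl | rfl | rfl)
        exacts [⟨0, rfl⟩, ⟨1, rfl⟩, ⟨2, rfl⟩, ⟨3, rfl⟩]
    have hcol : ∀ i : Fin 4, M.mulVec (fun j => if i = j then (1:ℝ) else 0)
        = fun k => M k i := by
      intro i; funext k
      simp [Matrix.mulVec, dotProduct, mul_ite, Finset.sum_ite_eq]
    rw [hgens, Set.image_insert_eq, hr, Set.image_insert_eq, Set.image_insert_eq,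
      Set.image_insert_eq, Set.image_singleton, Matrix.mulVec_zero, add_zero,
      hcol 0, hcol 1, hcol 2, hcol 3]
  have hLaff :
      convexHull ℝ ((fun x => v + M.mulVec x) '' gens)
        = (fun y => v + y) '' ((Matrix.toLin' M) '' convexHull ℝ gens) := by
    have h1 : (fun x => v + M.mulVec x) '' gens
        = (fun y => v + y) '' ((Matrix.toLin' M) '' gens) := by
      rw [← Set.image_comp]; rfl
    rw [h1]
    have h2 : ∀ s : Set (Fin 4 → ℝ), (fun y => v + y) '' s = v +ᵥ s := fun s => rfl
    rw [h2, convexHull_vadd, ← h2, ← (Matrix.toLin' M).image_convexHull]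
  rw [← himg, hLaff]
  have h2 : ∀ s : Set (Fin 4 → ℝ), (fun y => v + y) '' s = (fun y => -v + y) ⁻¹' s := by
    intro s; ext y
    simp only [Set.mem_image, Set.mem_preimage]
    constructor
    · rintro ⟨x, hx, rfl⟩; simpa using hx
    · intro h; exact ⟨-v + y, h, by abel⟩
  rw [h2, measure_preimage_add]
  rw [Measure.addHaar_image_linearMap, LinearMap.det_toLin', hgens, hhull, hcorner]
  rw [← ENNReal.ofReal_mul (abs_nonneg _)]
  congr 1
  ring

set_option maxHeartbeats 2000000 in
/-- The 4-dimensional volume of `𝒬 = conv{v¹, v², v⁴, v⁵, v⁶, v⁸}`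
used in the triangulation of the trilinear hull by Speakman–Lee. -/
theorem volume_Q
    (a₁ b₁ a₂ b₂ a₃ b₃ : ℝ)
    (ha₁ : 0 ≤ a₁) (hab₁ : a₁ < b₁)
    (ha₂ : 0 ≤ a₂) (hab₂ : a₂ < b₂)
    (ha₃ : 0 ≤ a₃) (hab₃ : a₃ < b₃)
    (hΩ₁ : a₁*b₂*b₃ + b₁*a₂*a₃ ≤ b₁*a₂*b₃ + a₁*b₂*a₃)
    (hΩ₂ : b₁*a₂*b₃ + a₁*b₂*a₃ ≤ b₁*b₂*a₃ + a₁*a₂*b₃) :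
    volume (convexHull ℝ
      ({![b₁*a₂*a₃, b₁, a₂, a₃], ![a₁*a₂*a₃, a₁, a₂, a₃], ![a₁*b₂*a₃, a₁, b₂, a₃],
        ![a₁*b₂*b₃, a₁, b₂, b₃], ![b₁*b₂*b₃, b₁, b₂, b₃],
        ![b₁*a₂*b₃, b₁, a₂, b₃]} : Set (Fin 4 → ℝ)))
      = ENNReal.ofReal
          ((b₁-a₁)^2*(b₂-a₂)*(b₃-a₃)*(b₂*b₃-a₂*a₃) / 12) := by
  classical
  set V1 : Fin 4 → ℝ := ![b₁*a₂*a₃, b₁, a₂, a₃] with hV1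
  set V2 : Fin 4 → ℝ := ![a₁*a₂*a₃, a₁, a₂, a₃] with hV2
  set V4 : Fin 4 → ℝ := ![a₁*b₂*a₃, a₁, b₂, a₃] with hV4
  set V5 : Fin 4 → ℝ := ![a₁*b₂*b₃, a₁, b₂, b₃] with hV5
  set V6 : Fin 4 → ℝ := ![b₁*b₂*b₃, b₁, b₂, b₃] with hV6
  set V8 : Fin 4 → ℝ := ![b₁*a₂*b₃, b₁, a₂, b₃] with hV8
  have hb1 : 0 < b₁ - a₁ := by linarith
  have hb2 : 0 < b₂ - a₂ := by linarith
  have hb3 : 0 < b₃ - a₃ := by linarith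
  have h23 : a₂*a₃ < b₂*b₃ := by nlinarith
  have h13 : a₁*a₃ ≤ b₁*b₃ := by nlinarith
  have hdnn : (0:ℝ) ≤ (b₁-a₁)^2*(b₂-a₂)*(b₃-a₃)*(b₂*b₃-a₂*a₃) :=
    mul_nonneg (mul_nonneg (mul_nonneg (by positivity) hb2.le) hb3.le) (by linarith)
  set C1 : Set (Fin 4 → ℝ) := convexHull ℝ {V1, V2, V4, V5, V6} with hC1
  set C2 : Set (Fin 4 → ℝ) := convexHull ℝ {V1, V2, V5, V6, V8} with hC2
  -- volumes of the two simplices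
  have hvol1 : volume C1
      = ENNReal.ofReal ((b₁-a₁)^2*(b₂-a₂)*(b₃-a₃)*(b₂*b₃-a₂*a₃) / 24) := by
    set M : Matrix (Fin 4) (Fin 4) ℝ := Matrix.of
      ![![a₁*a₂*a₃ - b₁*a₂*a₃, a₁*b₂*a₃ - b₁*a₂*a₃, a₁*b₂*b₃ - b₁*a₂*a₃, b₁*b₂*b₃ - b₁*a₂*a₃],
        ![a₁-b₁, a₁-b₁, a₁-b₁, 0],
        ![0, b₂-a₂, b₂-a₂, b₂-a₂],
        ![0, 0, b₃-a₃, b₃-a₃]] with hM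
    have hdet : M.det = (b₁-a₁)^2*(b₂-a₂)*(b₃-a₃)*(b₂*b₃-a₂*a₃) := by
      rw [hM]
      simp [Matrix.det_succ_row_zero, Fin.sum_univ_succ, Fin.succAbove, Fin.castSucc,
        Fin.castAdd, Fin.castLE]
      ring
    have hset : ({V1, V1 + (fun k => M k 0), V1 + (fun k => M k 1), V1 + (fun k => M k 2),
        V1 + (fun k => M k 3)} : Set (Fin 4 → ℝ)) = {V1, V2, V4, V5, V6} := by
      have e0 : V1 + (fun k => M k 0) = V2 := by
        funext k; fin_cases k <;> (simp [hV1, hV2, hM, Matrix.vecHead, Matrix.vecTail]; try ring)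
      have e1 : V1 + (fun k => M k 1) = V4 := by
        funext k; fin_cases k <;> (simp [hV1, hV4, hM, Matrix.vecHead, Matrix.vecTail]; try ring)
      have e2 : V1 + (fun k => M k 2) = V5 := by
        funext k; fin_cases k <;> (simp [hV1, hV5, hM, Matrix.vecHead, Matrix.vecTail]; try ring)
      have e3 : V1 + (fun k => M k 3) = V6 := by
        funext k; fin_cases k <;> (simp [hV1, hV6, hM, Matrix.vecHead, Matrix.vecTail]; try ring)
      rw [e0, e1, e2, e3]
    have := simplex_vol M V1
    rw [hset] at this
    rw [hC1, this, hdet, abs_of_nonneg hdnn]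
  have hvol2 : volume C2
      = ENNReal.ofReal ((b₁-a₁)^2*(b₂-a₂)*(b₃-a₃)*(b₂*b₃-a₂*a₃) / 24) := by
    set M : Matrix (Fin 4) (Fin 4) ℝ := Matrix.of
      ![![a₁*a₂*a₃ - b₁*a₂*a₃, a₁*b₂*b₃ - b₁*a₂*a₃, b₁*b₂*b₃ - b₁*a₂*a₃, b₁*a₂*b₃ - b₁*a₂*a₃],
        ![a₁-b₁, a₁-b₁, 0, 0],
        ![0, b₂-a₂, b₂-a₂, 0],
        ![0, b₃-a₃, b₃-a₃, b₃-a₃]] with hM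
    have hdet : M.det = -((b₁-a₁)^2*(b₂-a₂)*(b₃-a₃)*(b₂*b₃-a₂*a₃)) := by
      rw [hM]
      simp [Matrix.det_succ_row_zero, Fin.sum_univ_succ, Fin.succAbove, Fin.castSucc,
        Fin.castAdd, Fin.castLE]
      ring
    have hset : ({V1, V1 + (fun k => M k 0), V1 + (fun k => M k 1), V1 + (fun k => M k 2),
        V1 + (fun k => M k 3)} : Set (Fin 4 → ℝ)) = {V1, V2, V5, V6, V8} := by
      have e0 : V1 + (fun k => M k 0) = V2 := by
        funext k; fin_cases k <;> (simp [hV1, hV2, hM, Matrix.vecHead, Matrix.vecTail]; try ring)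
      have e1 : V1 + (fun k => M k 1) = V5 := by
        funext k; fin_cases k <;> (simp [hV1, hV5, hM, Matrix.vecHead, Matrix.vecTail]; try ring)
      have e2 : V1 + (fun k => M k 2) = V6 := by
        funext k; fin_cases k <;> (simp [hV1, hV6, hM, Matrix.vecHead, Matrix.vecTail]; try ring)
      have e3 : V1 + (fun k => M k 3) = V8 := by
        funext k; fin_cases k <;> (simp [hV1, hV8, hM, Matrix.vecHead, Matrix.vecTail]; try ring)
      rw [e0, e1, e2, e3]
    have := simplex_vol M V1
    rw [hset] at this
    rw [hC2, this, hdet, abs_neg, abs_of_nonneg hdnn]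
  -- the midpoint of V4 V8 lies in the convex hull of {V1, V2, V5, V6}
  have hm : ((1/2:ℝ) • V4 + (1/2:ℝ) • V8)
      ∈ convexHull ℝ ({V1, V2, V5, V6} : Set (Fin 4 → ℝ)) := by
    set μ : ℝ := (b₂-a₂)*(b₁*b₃-a₁*a₃)/((b₁-a₁)*(b₂*b₃-a₂*a₃)) with hμ
    have hden : 0 < (b₁-a₁)*(b₂*b₃-a₂*a₃) := mul_pos hb1 (by linarith)
    have hμ0 : 0 ≤ μ := div_nonneg (by nlinarith) hden.le
    have hμ1 : μ ≤ 1 := by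
      rw [hμ, div_le_one hden]; nlinarith [hΩ₁]
    have hF : Convex ℝ (convexHull ℝ ({V1, V2, V5, V6} : Set (Fin 4 → ℝ))) :=
      convex_convexHull ℝ _
    have hp : μ • V1 + (1-μ) • V2 ∈ convexHull ℝ ({V1, V2, V5, V6} : Set (Fin 4 → ℝ)) :=
      hF (subset_convexHull ℝ _ (by simp)) (subset_convexHull ℝ _ (by simp))
        hμ0 (by linarith) (by ring)
    have hq : μ • V5 + (1-μ) • V6 ∈ convexHull ℝ ({V1, V2, V5, V6} : Set (Fin 4 → ℝ)) :=
      hF (subset_convexHull ℝ _ (by simp)) (subset_convexHull ℝ _ (by simp))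
        hμ0 (by linarith) (by ring)
    have hne1 : b₁ - a₁ ≠ 0 := ne_of_gt hb1
    have hne2 : b₂*b₃ - a₂*a₃ ≠ 0 := by linarith
    have hmeq : (1/2:ℝ) • V4 + (1/2:ℝ) • V8
        = (1/2:ℝ) • (μ • V1 + (1-μ) • V2) + (1/2:ℝ) • (μ • V5 + (1-μ) • V6) := by
      funext k
      fin_cases k <;> simp [hV1, hV2, hV4, hV5, hV6, hV8] <;>
        (rw [hμ]; field_simp [show b₂*b₃ - a₃*a₂ ≠ 0 by rwa [mul_comm a₃]]; ring)
    rw [hmeq]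
    exact hF hp hq (by norm_num) (by norm_num) (by norm_num)
  -- decomposition of the hull
  have hsub1 : ({V1, V2, V5, V6} : Set (Fin 4 → ℝ)) ⊆ {V1, V2, V4, V5, V6} := by
    intro w hw; simp only [mem_insert_iff, mem_singleton_iff] at hw ⊢; tauto
  have hsub2 : ({V1, V2, V5, V6} : Set (Fin 4 → ℝ)) ⊆ {V1, V2, V5, V6, V8} := by
    intro w hw; simp only [mem_insert_iff, mem_singleton_iff] at hw ⊢; tauto
  have hdecomp : convexHull ℝ ({V1, V2, V4, V5, V6, V8} : Set (Fin 4 → ℝ)) = C1 ∪ C2 := by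
    apply Subset.antisymm
    · have hSeq : ({V1, V2, V4, V5, V6, V8} : Set (Fin 4 → ℝ))
          = ({V1, V2, V5, V6} : Set (Fin 4 → ℝ)) ∪ {V4, V8} := by
        ext x; simp only [mem_insert_iff, mem_singleton_iff, mem_union]; tauto
      rw [hSeq, convexHull_union (insert_nonempty _ _) (insert_nonempty _ _)]
      intro x hx
      rw [mem_convexJoin] at hx
      obtain ⟨y, hy, z, hz, hxseg⟩ := hx
      rw [convexHull_pair] at hz
      obtain ⟨θ1, θ2, hθ1, hθ2, hθs, rfl⟩ := hz
      have hyC1 : y ∈ C1 := convexHull_mono hsub1 hy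
      have hyC2 : y ∈ C2 := convexHull_mono hsub2 hy
      rcases le_or_gt θ1 (1/2) with hc | hc
      · -- z closer to V8 : z ∈ C2
        have h8 : V8 ∈ C2 := subset_convexHull ℝ _ (by simp)
        have hmm : ((1/2:ℝ) • V4 + (1/2:ℝ) • V8) ∈ C2 := convexHull_mono hsub2 hm
        have hcomb := (convex_convexHull ℝ ({V1, V2, V5, V6, V8} : Set (Fin 4 → ℝ)))
          hmm h8 (a := 2*θ1) (b := θ2 - θ1) (by linarith) (by linarith) (by linarith)
        have heq : θ1 • V4 + θ2 • V8
            = (2*θ1) • ((1/2:ℝ) • V4 + (1/2:ℝ) • V8) + (θ2 - θ1) • V8 := by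
          module
        rw [heq] at hxseg
        exact Or.inr ((convex_convexHull ℝ _).segment_subset hyC2 hcomb hxseg)
      · -- z closer to V4 : z ∈ C1
        have h4 : V4 ∈ C1 := subset_convexHull ℝ _ (by simp)
        have hmm : ((1/2:ℝ) • V4 + (1/2:ℝ) • V8) ∈ C1 := convexHull_mono hsub1 hm
        have hcomb := (convex_convexHull ℝ ({V1, V2, V4, V5, V6} : Set (Fin 4 → ℝ)))
          h4 hmm (a := θ1 - θ2) (b := 2*θ2) (by linarith) (by linarith) (by linarith)
        have heq : θ1 • V4 + θ2 • V8
            = (θ1 - θ2) • V4 + (2*θ2) • ((1/2:ℝ) • V4 + (1/2:ℝ) • V8) := by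
          module
        rw [heq] at hxseg
        exact Or.inl ((convex_convexHull ℝ _).segment_subset hyC1 hcomb hxseg)
    · apply union_subset
      · exact convexHull_mono (by
          intro w hw; simp only [mem_insert_iff, mem_singleton_iff] at hw ⊢; tauto)
      · exact convexHull_mono (by
          intro w hw; simp only [mem_insert_iff, mem_singleton_iff] at hw ⊢; tauto)
  -- the intersection is contained in a hyperplane and is null
  have hinter : volume (C1 ∩ C2) = 0 := by
    set f : (Fin 4 → ℝ) → ℝ := fun x => (b₃-a₃) * x 2 - (b₂-a₂) * x 3 with hf
    have hlin : IsLinearMap ℝ f := by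
      constructor
      · intro x y; simp only [hf, Pi.add_apply]; ring
      · intro c x; simp only [hf, Pi.smul_apply, smul_eq_mul]; ring
    have hC1h : C1 ⊆ {x | a₂*b₃ - a₃*b₂ ≤ f x} := by
      rw [hC1]
      apply convexHull_min _ (convex_halfSpace_ge hlin _)
      rintro x (rfl | rfl | rfl | rfl | rfl) <;>
        (simp only [hf, hV1, hV2, hV4, hV5, hV6, mem_setOf_eq, Matrix.cons_val_two,
          Matrix.tail_cons, Matrix.head_cons, Matrix.cons_val_three] <;> nlinarith)
    have hC2h : C2 ⊆ {x | f x ≤ a₂*b₃ - a₃*b₂} := by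
      rw [hC2]
      apply convexHull_min _ (convex_halfSpace_le hlin _)
      rintro x (rfl | rfl | rfl | rfl | rfl) <;>
        (simp only [hf, hV1, hV2, hV5, hV6, hV8, mem_setOf_eq, Matrix.cons_val_two,
          Matrix.tail_cons, Matrix.head_cons, Matrix.cons_val_three] <;> nlinarith)
    have hplane : C1 ∩ C2 ⊆ {x | f x = a₂*b₃ - a₃*b₂} :=
      fun x hx => le_antisymm (hC2h hx.2) (hC1h hx.1)
    refine measure_mono_null hplane ?_
    set ℓ : (Fin 4 → ℝ) →ₗ[ℝ] ℝ := hlin.mk' f with hℓ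
    have hV1f : f V1 = a₂*b₃ - a₃*b₂ := by
      simp only [hf, hV1, Matrix.cons_val_two, Matrix.tail_cons, Matrix.head_cons,
        Matrix.cons_val_three]
      ring
    have hker : {x : Fin 4 → ℝ | f x = a₂*b₃ - a₃*b₂}
        = (fun y => -V1 + y) ⁻¹' ((LinearMap.ker ℓ : Submodule ℝ (Fin 4 → ℝ)) : Set (Fin 4 → ℝ)) := by
      ext x
      simp only [mem_setOf_eq, mem_preimage, SetLike.mem_coe, LinearMap.mem_ker]
      have : ℓ (-V1 + x) = f x - f V1 := by
        simp only [hℓ, IsLinearMap.mk'_apply, hf, Pi.add_apply, Pi.neg_apply]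
        ring
      rw [this, hV1f]
      constructor <;> intro h <;> linarith
    rw [hker, measure_preimage_add]
    apply Measure.addHaar_submodule
    intro htop
    have hmem : (Pi.single 2 1 : Fin 4 → ℝ) ∈ LinearMap.ker ℓ := by
      rw [htop]; trivial
    rw [LinearMap.mem_ker] at hmem
    have : ℓ (Pi.single 2 1 : Fin 4 → ℝ) = b₃ - a₃ := by
      simp [hℓ, IsLinearMap.mk'_apply, hf, Pi.single_apply]
    rw [this] at hmem
    linarith
  -- put everything together
  rw [hdecomp]
  have hC2meas : MeasurableSet C2 :=
    ((Set.toFinite ({V1, V2, V5, V6, V8} : Set (Fin 4 → ℝ))).isCompact_convexHull ℝ).isClosed.measurableSet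
  have hsum := measure_union_add_inter (μ := volume) C1 hC2meas
  rw [hinter, add_zero] at hsum
  rw [hsum, hvol1, hvol2, ← ENNReal.ofReal_add (by positivity) (by positivity)]
  congr 1
  ring
end

section
/- Let a₁,b₁,a₂,b₂,a₃,b₃ be real parameters with 0 ≤ aᵢ < bᵢ for i = 1,2,3 satisfying the ordering condition (Ω). Then the midpoint of the segment between v³ = (a₁a₂b₃, a₁, a₂, b₃) and v⁷ = (b₁b₂a₃, b₁, b₂, a₃), namely the point ((a₁a₂b₃ + b₁b₂a₃)/2, (a₁+b₁)/2, (a₂+b₂)/2, (a₃+b₃)/2), belongs to 𝒬 := conv{v¹, v², v⁴, v⁵, v⁶, v⁸}. -/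
/-- The midpoint of the segment between `v³` and `v⁷` belongs to
`𝒬 = conv{v¹, v², v⁴, v⁵, v⁶, v⁸}` (Speakman–Lee, proof of Theorem 1). -/
theorem midpoint_v3_v7_mem_Q
    (a₁ b₁ a₂ b₂ a₃ b₃ : ℝ)
    (ha₁ : 0 ≤ a₁) (hab₁ : a₁ < b₁)
    (ha₂ : 0 ≤ a₂) (hab₂ : a₂ < b₂)
    (ha₃ : 0 ≤ a₃) (hab₃ : a₃ < b₃)
    (hΩ₁ : a₁*b₂*b₃ + b₁*a₂*a₃ ≤ b₁*a₂*b₃ + a₁*b₂*a₃)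
    (hΩ₂ : b₁*a₂*b₃ + a₁*b₂*a₃ ≤ b₁*b₂*a₃ + a₁*a₂*b₃) :
    (![(a₁*a₂*b₃ + b₁*b₂*a₃)/2, (a₁+b₁)/2, (a₂+b₂)/2, (a₃+b₃)/2] : Fin 4 → ℝ)
      ∈ convexHull ℝ
        ({![b₁*a₂*a₃, b₁, a₂, a₃], ![a₁*a₂*a₃, a₁, a₂, a₃], ![a₁*b₂*a₃, a₁, b₂, a₃],
          ![a₁*b₂*b₃, a₁, b₂, b₃], ![b₁*b₂*b₃, b₁, b₂, b₃],
          ![b₁*a₂*b₃, b₁, a₂, b₃]} : Set (Fin 4 → ℝ)) := by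
  set S : Set (Fin 4 → ℝ) :=
    {![b₁*a₂*a₃, b₁, a₂, a₃], ![a₁*a₂*a₃, a₁, a₂, a₃], ![a₁*b₂*a₃, a₁, b₂, a₃],
      ![a₁*b₂*b₃, a₁, b₂, b₃], ![b₁*b₂*b₃, b₁, b₂, b₃],
      ![b₁*a₂*b₃, b₁, a₂, b₃]} with hS
  have hconv := convex_convexHull ℝ S
  have half : (0:ℝ) ≤ 1/2 := by norm_num
  -- midpoint of v⁴ and v⁸
  have hp : (![(b₁*a₂*b₃ + a₁*b₂*a₃)/2, (a₁+b₁)/2, (a₂+b₂)/2, (a₃+b₃)/2] : Fin 4 → ℝ)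
      ∈ convexHull ℝ S := by
    have h4 : (![a₁*b₂*a₃, a₁, b₂, a₃] : Fin 4 → ℝ) ∈ convexHull ℝ S :=
      subset_convexHull ℝ S (by simp [hS])
    have h8 : (![b₁*a₂*b₃, b₁, a₂, b₃] : Fin 4 → ℝ) ∈ convexHull ℝ S :=
      subset_convexHull ℝ S (by simp [hS])
    have h := hconv h8 h4 half half (by norm_num)
    convert h using 1
    funext i
    fin_cases i <;> simp [Pi.smul_apply, smul_eq_mul] <;> ring
  -- midpoint of v² and v⁶
  have hq : (![(a₁*a₂*a₃ + b₁*b₂*b₃)/2, (a₁+b₁)/2, (a₂+b₂)/2, (a₃+b₃)/2] : Fin 4 → ℝ)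
      ∈ convexHull ℝ S := by
    have h2 : (![a₁*a₂*a₃, a₁, a₂, a₃] : Fin 4 → ℝ) ∈ convexHull ℝ S :=
      subset_convexHull ℝ S (by simp [hS])
    have h6 : (![b₁*b₂*b₃, b₁, b₂, b₃] : Fin 4 → ℝ) ∈ convexHull ℝ S :=
      subset_convexHull ℝ S (by simp [hS])
    have h := hconv h2 h6 half half (by norm_num)
    convert h using 1
    funext i
    fin_cases i <;> simp [Pi.smul_apply, smul_eq_mul] <;> ring
  -- the target f-value lies between the f-values of these two midpoints
  obtain ⟨t, s, ht, hs, hts, hF⟩ :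
      ∃ t s : ℝ, 0 ≤ t ∧ 0 ≤ s ∧ t + s = 1 ∧
        t * ((b₁*a₂*b₃ + a₁*b₂*a₃)/2) + s * ((a₁*a₂*a₃ + b₁*b₂*b₃)/2)
          = (a₁*a₂*b₃ + b₁*b₂*a₃)/2 := by
    have hAB : (b₁*a₂*b₃ + a₁*b₂*a₃)/2 ≤ (a₁*a₂*a₃ + b₁*b₂*b₃)/2 := by
      nlinarith [mul_nonneg (mul_nonneg ha₁ ha₂) ha₃,
        mul_nonneg (sub_nonneg.2 hab₁.le) (sub_nonneg.2 hab₂.le),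
        mul_nonneg (mul_nonneg (sub_nonneg.2 hab₁.le) (sub_nonneg.2 hab₂.le))
          (sub_nonneg.2 hab₃.le),
        mul_nonneg (mul_nonneg ha₁ (sub_nonneg.2 hab₂.le)) (sub_nonneg.2 hab₃.le),
        mul_nonneg (mul_nonneg ha₂ (sub_nonneg.2 hab₁.le)) (sub_nonneg.2 hab₃.le)]
    have hmem : (a₁*a₂*b₃ + b₁*b₂*a₃)/2 ∈
        segment ℝ ((b₁*a₂*b₃ + a₁*b₂*a₃)/2) ((a₁*a₂*a₃ + b₁*b₂*b₃)/2) := by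
      rw [segment_eq_Icc hAB]
      constructor
      · linarith
      · nlinarith [mul_nonneg (mul_nonneg ha₁ ha₂) (sub_nonneg.2 hab₃.le),
          mul_nonneg (mul_nonneg (sub_nonneg.2 hab₁.le) (sub_nonneg.2 hab₂.le))
            (sub_nonneg.2 hab₃.le),
          mul_nonneg (mul_nonneg ha₂ (sub_nonneg.2 hab₁.le)) (sub_nonneg.2 hab₃.le),
          mul_nonneg (mul_nonneg ha₁ (sub_nonneg.2 hab₂.le)) (sub_nonneg.2 hab₃.le)]
    obtain ⟨t, s, ht, hs, hts, h⟩ := hmem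
    exact ⟨t, s, ht, hs, hts, by simpa [smul_eq_mul] using h⟩
  have h := hconv hp hq ht hs hts
  convert h using 1
  funext i
  fin_cases i <;> simp [Pi.smul_apply, smul_eq_mul]
  · linarith [hF]
  all_goals nlinarith [hts]
end

section
/- Let a₁,b₁,a₂,b₂,a₃,b₃ be real parameters with 0 < aᵢ < bᵢ for i = 1,2,3 satisfying the ordering condition (Ω). Then −a₁²a₂²a₃ + a₁²a₂b₂b₃ + a₁a₂²b₁b₃ + 3a₁a₂a₃b₁b₂ − 3a₁a₂b₁b₂b₃ − a₁a₃b₁b₂² − a₂a₃b₁²b₂ + b₁²b₂²b₃ ≥ 0. -/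
/-- Nonnegativity of the numerator obtained when substituting the extreme point
`v₃¹¹` of `𝒫₃` into the hull facet inequality
`−f + a₂a₃x₁ + b₁b₃x₂ + b₁a₂x₃ − b₁a₂b₃ − b₁a₂a₃ ≥ 0` (Speakman–Lee, §9.4). -/
theorem numerator_nonneg_v311_ineq9
    (a₁ b₁ a₂ b₂ a₃ b₃ : ℝ)
    (ha₁ : 0 < a₁) (hab₁ : a₁ < b₁)
    (ha₂ : 0 < a₂) (hab₂ : a₂ < b₂)
    (ha₃ : 0 < a₃) (hab₃ : a₃ < b₃)
    (hΩ₁ : a₁*b₂*b₃ + b₁*a₂*a₃ ≤ b₁*a₂*b₃ + a₁*b₂*a₃)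
    (hΩ₂ : b₁*a₂*b₃ + a₁*b₂*a₃ ≤ b₁*b₂*a₃ + a₁*a₂*b₃) :
    -a₁^2*a₂^2*a₃ + a₁^2*a₂*b₂*b₃ + a₁*a₂^2*b₁*b₃ + 3*a₁*a₂*a₃*b₁*b₂
      - 3*a₁*a₂*b₁*b₂*b₃ - a₁*a₃*b₁*b₂^2 - a₂*a₃*b₁^2*b₂ + b₁^2*b₂^2*b₃ ≥ 0 := by
  -- q = b₂a₃ - a₂b₃ ≥ 0, from hΩ₂ divided by (b₁ - a₁) > 0
  have hq : b₂*a₃ - a₂*b₃ ≥ 0 := by nlinarith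
  set C : ℝ := a₁^2*a₂*b₂ + a₁*a₂^2*b₁ - 3*a₁*a₂*b₁*b₂ + b₁^2*b₂^2 with hC
  have hd1 : 0 < b₁ - a₁ := by linarith
  have hd2 : 0 < b₂ - a₂ := by linarith
  have hd3 : 0 < b₃ - a₃ := by linarith
  have hbb : 0 < b₁*b₂ - a₁*a₂ := by nlinarith
  -- inner - C = a₂ (b₁ - a₁)(b₁b₂ - a₁a₂) ≥ 0
  have hkey : a₂ * (-a₁^2*a₂^2*a₃ + a₁^2*a₂*b₂*b₃ + a₁*a₂^2*b₁*b₃ + 3*a₁*a₂*a₃*b₁*b₂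
      - 3*a₁*a₂*b₁*b₂*b₃ - a₁*a₃*b₁*b₂^2 - a₂*a₃*b₁^2*b₂ + b₁^2*b₂^2*b₃)
      = a₃*(b₂-a₂)*((a₁*a₂ - b₁*b₂)^2 + a₂*b₂*(b₁-a₁)^2) - C*(b₂*a₃ - a₂*b₃) := by
    ring
  rcases le_or_gt C 0 with hCle | hCpos
  · have h1 : a₃*(b₂-a₂)*((a₁*a₂ - b₁*b₂)^2 + a₂*b₂*(b₁-a₁)^2) ≥ 0 := by
      have := mul_nonneg (mul_nonneg ha₃.le hd2.le) (add_nonneg (sq_nonneg (a₁*a₂ - b₁*b₂)) (mul_nonneg (mul_nonneg ha₂.le (ha₂.trans hab₂).le) (sq_nonneg (b₁-a₁))))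
      linarith
    have h2 : C*(b₂*a₃ - a₂*b₃) ≤ 0 := mul_nonpos_of_nonpos_of_nonneg hCle hq
    nlinarith
  · -- a₂E = a₃(b₂-a₂)(inner - C) + C a₂ (b₃ - a₃)
    have hinner : a₃*(b₂-a₂)*((a₁*a₂ - b₁*b₂)^2 + a₂*b₂*(b₁-a₁)^2 - C)
        = a₃*(b₂-a₂)*(a₂*(b₁-a₁)*(b₁*b₂ - a₁*a₂)) := by ring
    have h1 : a₃*(b₂-a₂)*(a₂*(b₁-a₁)*(b₁*b₂ - a₁*a₂)) ≥ 0 :=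
      mul_nonneg (mul_nonneg ha₃.le hd2.le) (mul_nonneg (mul_nonneg ha₂.le hd1.le) hbb.le)
    have h2 : C*(a₂*(b₃-a₃)) ≥ 0 := mul_nonneg hCpos.le (mul_nonneg ha₂.le hd3.le)
    nlinarith
end
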